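/- Correctness of the selection-sort planning program: the program that repeatedly (outer loop over i from 0 to n−1) sets min := i, scans j from i+1 to n−1 updating min whenever v(j) < v(min), then swaps v(i) and v(min), terminates with the vector sorted in non-decreasing order. -/

import Mathlib

/-- Swap the entries at positions `i` and `j` of a vector. -/
def swapAt (v : ℕ → ℕ) (i j : ℕ) : ℕ → ℕ :=
  fun t => if t = i then v j else if t = j then v i else v t

/-- Scan over the index list, updating the current minimum index `m` whenever a
strictly smaller value is found. -/
def scanMin (v : ℕ → ℕ) : ℕ → List ℕ → ℕ
  | m, [] => m
  | m, j :: js => scanMin v (if v j < v m then j else m) js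

/-- Index of the minimum value found scanning `j` from `i+1` to `n-1`, starting
with `min := i`. -/
def selectMin (v : ℕ → ℕ) (i n : ℕ) : ℕ :=
  scanMin v i ((List.range n).drop (i + 1))

/-- Selection sort: `selSort v n k` is the vector after `k` outer-loop iterations;
iteration `i` sets `min := selectMin · i n` and swaps positions `i` and `min`. -/
def selSort (v : ℕ → ℕ) (n : ℕ) : ℕ → (ℕ → ℕ)
  | 0 => v
  | i + 1 => swapAt (selSort v n i) i (selectMin (selSort v n i) i n)

theorem drop_range_aux (n k : ℕ) : (List.range n).drop k = List.range' k (n - k) := by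
  apply List.ext_getElem
  · simp
  · intro i h1 h2
    simp only [List.getElem_drop, List.getElem_range, List.getElem_range'_1]

theorem mem_drop_range {j k n : ℕ} : j ∈ (List.range n).drop k ↔ k ≤ j ∧ j < n := by
  rw [drop_range_aux, List.mem_range']
  constructor
  · rintro ⟨i, hi, rfl⟩; omega
  · rintro ⟨h1, h2⟩; exact ⟨j - k, by omega, by omega⟩

theorem scanMin_mem (v : ℕ → ℕ) (m : ℕ) (js : List ℕ) :
    scanMin v m js = m ∨ scanMin v m js ∈ js := by
  induction js generalizing m with
  | nil => left; rfl
  | cons j js ih =>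
    simp only [scanMin]
    rcases ih (if v j < v m then j else m) with h | h
    · rw [h]; split
      · right; exact List.mem_cons_self
      · left; rfl
    · right; exact List.mem_cons_of_mem _ h

theorem scanMin_le_start (v : ℕ → ℕ) (m : ℕ) (js : List ℕ) :
    v (scanMin v m js) ≤ v m := by
  induction js generalizing m with
  | nil => exact le_refl _
  | cons j js ih =>
    simp only [scanMin]
    refine le_trans (ih _) ?_
    split <;> omega

theorem scanMin_le_mem (v : ℕ → ℕ) (m : ℕ) (js : List ℕ) {j : ℕ} (hj : j ∈ js) :
    v (scanMin v m js) ≤ v j := by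
  induction js generalizing m with
  | nil => simp at hj
  | cons j' js ih =>
    simp only [scanMin]
    rcases List.mem_cons.mp hj with rfl | h
    · refine le_trans (scanMin_le_start v _ js) ?_
      split <;> omega
    · exact ih _ h

theorem selectMin_ge (v : ℕ → ℕ) (i n : ℕ) : i ≤ selectMin v i n := by
  rcases scanMin_mem v i ((List.range n).drop (i + 1)) with h | h
  · rw [selectMin, h]
  · have := mem_drop_range.mp h; rw [selectMin]; omega

theorem selectMin_lt (v : ℕ → ℕ) {i n : ℕ} (hi : i < n) : selectMin v i n < n := by
  rcases scanMin_mem v i ((List.range n).drop (i + 1)) with h | h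
  · rw [selectMin, h]; exact hi
  · have := mem_drop_range.mp h; rw [selectMin]; omega

theorem selectMin_min (v : ℕ → ℕ) {i n j : ℕ} (h1 : i ≤ j) (h2 : j < n) :
    v (selectMin v i n) ≤ v j := by
  rcases eq_or_lt_of_le h1 with rfl | h
  · exact scanMin_le_start v _ _
  · exact scanMin_le_mem v i _ (mem_drop_range.mpr ⟨h, h2⟩)

theorem swapAt_eq_comp (v : ℕ → ℕ) (i j : ℕ) :
    swapAt v i j = v ∘ (Equiv.swap i j) := by
  funext t
  simp only [swapAt, Function.comp_apply, Equiv.swap_apply_def]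
  split_ifs <;> rfl

theorem map_swapAt_perm (v : ℕ → ℕ) {i j n : ℕ} (hi : i < n) (hj : j < n) :
    ((List.range n).map (swapAt v i j)).Perm ((List.range n).map v) := by
  rw [swapAt_eq_comp, ← List.map_map]
  refine List.Perm.map v ?_
  have hlt : ∀ t, t < n → Equiv.swap i j t < n := by
    intro t ht
    rcases eq_or_ne t i with rfl | h1
    · rw [Equiv.swap_apply_left]; exact hj
    rcases eq_or_ne t j with rfl | h2
    · rw [Equiv.swap_apply_right]; exact hi
    · rw [Equiv.swap_apply_of_ne_of_ne h1 h2]; exact ht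
  apply List.perm_of_nodup_nodup_toFinset_eq
  · exact (List.nodup_range (n := n)).map (Equiv.swap i j).injective
  · exact List.nodup_range
  · ext x
    simp only [List.mem_toFinset, List.mem_map, List.mem_range]
    constructor
    · rintro ⟨y, hy, rfl⟩; exact hlt y hy
    · intro hx
      refine ⟨Equiv.swap i j x, ?_, Equiv.swap_apply_self i j x⟩
      exact hlt x hx

theorem selSort_invariant (v : ℕ → ℕ) (n : ℕ) :
    ∀ i, i ≤ n → ∀ a b, a < i → a ≤ b → b < n → selSort v n i a ≤ selSort v n i b := by
  intro i
  induction i with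
  | zero => intro _ a b h; omega
  | succ i ih =>
    intro hin a b ha hab hb
    have hi : i < n := hin
    set w := selSort v n i with hw
    set m := selectMin w i n with hm
    have him : i ≤ m := selectMin_ge w i n
    have hmn : m < n := selectMin_lt w hi
    have hmin : ∀ j, i ≤ j → j < n → w m ≤ w j := fun j h1 h2 => selectMin_min w h1 h2
    have ihw : ∀ a b, a < i → a ≤ b → b < n → w a ≤ w b := fun a b h1 h2 h3 =>
      ih (le_of_lt hi) a b h1 h2 h3
    show swapAt w i m a ≤ swapAt w i m b
    unfold swapAt
    rcases lt_or_eq_of_le (Nat.lt_succ_iff.mp ha) with halt | rfl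
    · have ha1 : a ≠ i := by omega
      have ha2 : a ≠ m := by omega
      rw [if_neg ha1, if_neg ha2]
      split
      · exact ihw a m halt (by omega) hmn
      · split
        · exact ihw a i halt (le_of_lt halt) hi
        · exact ihw a b halt hab hb
    · rw [if_pos rfl]
      split
      · exact hmin m him hmn
      · split
        · exact hmin a le_rfl hi
        · exact hmin b hab hb

theorem selSort_perm (v : ℕ → ℕ) (n : ℕ) :
    ∀ i, i ≤ n → ((List.range n).map (selSort v n i)).Perm ((List.range n).map v) := by
  intro i
  induction i with
  | zero => intro _; rfl
  | succ i ih =>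
    intro hin
    have hi : i < n := hin
    refine List.Perm.trans ?_ (ih (le_of_lt hi))
    exact map_swapAt_perm _ hi (selectMin_lt _ hi)

/-- Correctness of the selection-sort planning program: after the `n`
outer iterations the vector restricted to positions `0..n-1` is a permutation of the
input and is sorted in non-decreasing order. -/
theorem selection_sort_correct (v : ℕ → ℕ) (n : ℕ) :
    (∀ a b, a ≤ b → b < n → selSort v n n a ≤ selSort v n n b) ∧
    ((List.range n).map (selSort v n n)).Perm ((List.range n).map v) := by
  constructor
  · intro a b hab hb
    exact selSort_invariant v n n le_rfl a b (lt_of_le_of_lt hab hb) hab hb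
  · exact selSort_perm v n n le_rfl
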